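/- Let h₁ = √2·1_{[0,1/2]}, h₂ = √2·1_{[1/2,1]}, and X = W(h₁)·sign(W(h₂)). Then the quadratic variation at time 1 of the martingale M^X_t = E[X|F_t] is not almost surely bounded by 1. -/

import Mathlib

open MeasureTheory ProbabilityTheory Filter Topology
open scoped NNReal

noncomputable section

/-- `B` is a Brownian motion with respect to the filtration `𝓖` under `μ`. -/
def IsBrownianMotion {Ω : Type} {m0 : MeasurableSpace Ω} (μ : Measure Ω)
    (𝓖 : Filtration ℝ≥0 m0) (B : ℝ≥0 → Ω → ℝ) : Prop :=
  (∀ t, Measurable[𝓖 t] (B t)) ∧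
  (∀ᵐ ω ∂μ, B 0 ω = 0) ∧
  (∀ᵐ ω ∂μ, Continuous fun t => B t ω) ∧
  (∀ s t : ℝ≥0, s ≤ t → μ.map (fun ω => B t ω - B s ω) = gaussianReal 0 (t - s)) ∧
  (∀ s t : ℝ≥0, s ≤ t →
    Indep (𝓖 s) (MeasurableSpace.comap (fun ω => B t ω - B s ω) inferInstance) μ)

/-- `A` is the quadratic variation process of `M` (Doob–Meyer characterization). -/
def IsQuadraticVariation {Ω : Type} {m0 : MeasurableSpace Ω} (μ : Measure Ω)
    (ℱ : Filtration ℝ≥0 m0) (M A : ℝ≥0 → Ω → ℝ) : Prop :=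
  Adapted ℱ A ∧
  (∀ᵐ ω ∂μ, A 0 ω = 0 ∧ Monotone (fun t => A t ω) ∧ Continuous fun t => A t ω) ∧
  Martingale (fun t ω => (M t ω) ^ 2 - A t ω) ℱ μ

/-- The sign function, equal to `1` for `x ≥ 0` and `-1` for `x < 0`. -/
def sgn (x : ℝ) : ℝ := if 0 ≤ x then 1 else -1

lemma sgn_sq (x : ℝ) : sgn x ^ 2 = 1 := by unfold sgn; split <;> norm_num

lemma abs_sgn (x : ℝ) : |sgn x| = 1 := by unfold sgn; split <;> norm_num

lemma measurable_sgn : Measurable sgn :=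
  Measurable.ite (measurableSet_le measurable_const measurable_id) measurable_const measurable_const

lemma sgn_sqrt_mul (x : ℝ) : sgn (Real.sqrt 2 * x) = sgn x := by
  unfold sgn
  have h2 : (0:ℝ) < Real.sqrt 2 := Real.sqrt_pos.mpr (by norm_num)
  simp [mul_nonneg_iff_of_pos_left h2]

lemma gaussian_singleton {v : ℝ≥0} (hv : v ≠ 0) : gaussianReal 0 v {0} = 0 := by
  rw [gaussianReal_of_var_ne_zero 0 hv]
  exact (withDensity_absolutelyContinuous _ _) (by simp)

lemma gaussian_map_neg {v : ℝ≥0} : (gaussianReal 0 v).map (fun x => -x) = gaussianReal 0 v := by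
  have := gaussianReal_map_const_mul (μ := 0) (v := v) (-1)
  simp only [neg_one_mul, mul_zero] at this
  rw [this]
  congr 1
  ext
  simp

lemma sgn_neg_ae {v : ℝ≥0} (hv : v ≠ 0) :
    ∀ᵐ x ∂(gaussianReal 0 v), sgn (-x) = -sgn x := by
  have h0 : (gaussianReal 0 v) {0} = 0 := gaussian_singleton hv
  filter_upwards [measure_eq_zero_iff_ae_notMem.mp h0] with x hx
  have hx' : x ≠ 0 := hx
  unfold sgn
  rcases lt_or_gt_of_ne hx' with h | h
  · rw [if_neg (not_le.mpr h), if_pos (by linarith)]; ring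
  · rw [if_pos h.le, if_neg (by simp; linarith)]

lemma integral_sgn_gaussian {v : ℝ≥0} (hv : v ≠ 0) :
    ∫ x, sgn x ∂(gaussianReal 0 v) = 0 := by
  have hmap : ∫ x, sgn x ∂(gaussianReal 0 v)
      = ∫ x, sgn (-x) ∂(gaussianReal 0 v) := by
    conv_lhs => rw [← gaussian_map_neg (v := v)]
    rw [integral_map measurable_neg.aemeasurable
      measurable_sgn.aestronglyMeasurable]
  have h2 : ∫ x, sgn (-x) ∂(gaussianReal 0 v) = ∫ x, -sgn x ∂(gaussianReal 0 v) :=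
    integral_congr_ae (sgn_neg_ae hv)
  rw [h2, integral_neg] at hmap
  linarith

lemma integrable_id_gaussian {v : ℝ≥0} (hv : v ≠ 0) :
    Integrable (fun x => x) (gaussianReal 0 v) := by
  rw [gaussianReal_of_var_ne_zero 0 hv]
  rw [integrable_withDensity_iff (measurable_gaussianPDF 0 v)
    (Filter.Eventually.of_forall fun x => ENNReal.ofReal_lt_top)]
  have hv' : (0:ℝ) < (v:ℝ) := by positivity
  have hb : (0:ℝ) < (2 * (v:ℝ))⁻¹ := by positivity
  have := (integrable_mul_exp_neg_mul_sq hb).const_mul ((Real.sqrt (2 * Real.pi * v))⁻¹)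
  refine this.congr (Filter.Eventually.of_forall fun x => ?_)
  simp only [gaussianPDF_def, ENNReal.toReal_ofReal (gaussianPDFReal_nonneg _ _ _)]
  simp only [gaussianPDFReal, sub_zero]
  rw [neg_div, div_eq_mul_inv, mul_comm ((x:ℝ)^2)]
  ring

lemma gaussian_Ioi_ne_zero {v : ℝ≥0} (hv : v ≠ 0) :
    gaussianReal 0 v (Set.Ioi (1:ℝ)) ≠ 0 := by
  rw [gaussianReal_of_var_ne_zero 0 hv]
  intro h
  rw [withDensity_apply_eq_zero (measurable_gaussianPDF 0 v)] at h
  have : {x : ℝ | gaussianPDF 0 v x ≠ 0} ∩ Set.Ioi 1 = Set.Ioi 1 := by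
    ext x
    simp only [Set.mem_inter_iff, Set.mem_setOf_eq, Set.mem_Ioi, and_iff_right_iff_imp]
    intro _
    simp [gaussianPDF_def, (ENNReal.ofReal_pos.mpr (gaussianPDFReal_pos 0 v x hv)).ne']
  rw [this] at h
  simp [Real.volume_Ioi] at h


/-- For `h₁ = √2·1_{[0,1/2]}`, `h₂ = √2·1_{[1/2,1]}` and `X = W(h₁)·sign(W(h₂))` (so that
`W(h₁) = √2·W_{1/2}` and `W(h₂) = √2·(W₁ - W_{1/2})`), the quadratic variation at time `1`
of the martingale `M^X_t = E[X | ℱ_t]` is not a.s. bounded by `1`. -/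
theorem stmt_8 {Ω : Type} {m0 : MeasurableSpace Ω} (μ : Measure Ω) [IsProbabilityMeasure μ]
    (W : ℝ≥0 → Ω → ℝ) (hWsm : ∀ t, StronglyMeasurable (W t))
    (ℱ : Filtration ℝ≥0 m0) (hℱ : ℱ = Filtration.natural W hWsm)
    (hW : IsBrownianMotion μ ℱ W)
    (X : Ω → ℝ)
    (hX : X = fun ω => (Real.sqrt 2 * W (1/2) ω) * sgn (Real.sqrt 2 * (W 1 ω - W (1/2) ω)))
    (A : ℝ≥0 → Ω → ℝ)
    (hA : IsQuadraticVariation μ ℱ (fun t => μ[X|ℱ t]) A) :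
    ¬ (∀ᵐ ω ∂μ, A 1 ω ≤ 1) := by
  intro h
  have half_le_one : (1/2 : ℝ≥0) ≤ 1 := by norm_num
  have hsub_half : (1 : ℝ≥0) - 1/2 = 1/2 := by
    rw [← NNReal.coe_inj, NNReal.coe_sub half_le_one]; norm_num
  set D : Ω → ℝ := fun ω => W 1 ω - W (1/2) ω with hDdef
  set D0 : Ω → ℝ := fun ω => W (1/2) ω - W 0 ω with hD0def
  have hWm : ∀ t, Measurable (W t) := fun t => (hWsm t).measurable
  have hDm : Measurable D := (hWm 1).sub (hWm (1/2))
  have hD0m : Measurable D0 := (hWm (1/2)).sub (hWm 0)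
  have hmapD : μ.map D = gaussianReal 0 (1/2) := by
    have := hW.2.2.2.1 (1/2) 1 half_le_one
    rwa [hsub_half] at this
  have hmapD0 : μ.map D0 = gaussianReal 0 (1/2) := by
    have := hW.2.2.2.1 0 (1/2) zero_le
    rwa [tsub_zero] at this
  have hW0 : ∀ᵐ ω ∂μ, W 0 ω = 0 := hW.2.1
  -- integrability of W (1/2)
  have hD0int : Integrable D0 μ := by
    have h1 : Integrable id (μ.map D0) := by
      rw [hmapD0]; exact integrable_id_gaussian (by norm_num)
    exact (integrable_map_measure aestronglyMeasurable_id hD0m.aemeasurable).mp h1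
  have hWhalf_int : Integrable (W (1/2)) μ := by
    refine hD0int.congr ?_
    filter_upwards [hW0] with ω h0
    simp [hD0def, h0]
  -- the sign factor
  set g : Ω → ℝ := fun ω => sgn (Real.sqrt 2 * D ω) with hgdef
  have hgm : Measurable g := measurable_sgn.comp (hDm.const_mul _)
  have hgint : Integrable g μ := by
    refine (integrable_const (1:ℝ)).mono' hgm.aestronglyMeasurable
      (Filter.Eventually.of_forall fun ω => ?_)
    rw [Real.norm_eq_abs, abs_sgn]
  have hXint : Integrable X μ := by
    refine (hWhalf_int.norm.const_mul (Real.sqrt 2)).mono'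
      ?_ (Filter.Eventually.of_forall fun ω => ?_)
    · rw [hX]
      exact (((hWm (1/2)).const_mul _).mul
        (measurable_sgn.comp (((hWm 1).sub (hWm (1/2))).const_mul _))).aestronglyMeasurable
    · rw [hX]
      simp only [Real.norm_eq_abs, abs_mul, abs_sgn, mul_one]
      rw [abs_of_nonneg (Real.sqrt_nonneg 2)]
  -- M 1 = X
  have hWhalf_meas1 : Measurable[ℱ 1] (W (1/2)) :=
    (hW.1 (1/2)).mono (ℱ.mono half_le_one) le_rfl
  have hXmeas1 : StronglyMeasurable[ℱ 1] X := by
    rw [hX]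
    exact (((hWhalf_meas1.const_mul _)).mul
      (measurable_sgn.comp (((hW.1 1).sub hWhalf_meas1).const_mul _))).stronglyMeasurable
  have hM1 : μ[X|ℱ 1] = X := condExp_of_stronglyMeasurable (ℱ.le 1) hXmeas1 hXint
  -- M (1/2) = 0
  have hindep : Indep (MeasurableSpace.comap D inferInstance) (ℱ (1/2)) μ :=
    (hW.2.2.2.2 (1/2) 1 half_le_one).symm
  have hgD : Measurable[MeasurableSpace.comap D inferInstance] g := by
    have hD' : Measurable[MeasurableSpace.comap D inferInstance] D :=
      measurable_iff_comap_le.mpr le_rfl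
    exact (measurable_sgn.comp (measurable_const_mul _)).comp hD'
  have hcond_g : μ[g|ℱ (1/2)] =ᵐ[μ] fun _ => μ[g] :=
    condExp_indep_eq hDm.comap_le (ℱ.le _) hgD.stronglyMeasurable hindep
  have hEg : μ[g] = 0 := by
    have h1 : ∫ x, sgn (Real.sqrt 2 * x) ∂(μ.map D) = ∫ ω, g ω ∂μ :=
      integral_map hDm.aemeasurable
        (measurable_sgn.comp (measurable_const_mul _)).aestronglyMeasurable
    rw [hmapD] at h1
    simp_rw [sgn_sqrt_mul] at h1
    rw [integral_sgn_gaussian (by norm_num)] at h1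
    exact h1.symm
  have hMhalf : μ[X|ℱ (1/2)] =ᵐ[μ] 0 := by
    have hXfg : X = (fun ω => Real.sqrt 2 * W (1/2) ω) * g := by
      funext ω; rw [hX]; rfl
    have hf_meas : StronglyMeasurable[ℱ (1/2)] (fun ω => Real.sqrt 2 * W (1/2) ω) :=
      ((hW.1 (1/2)).const_mul _).stronglyMeasurable
    have hmul := condExp_mul_of_stronglyMeasurable_left hf_meas (hXfg ▸ hXint) hgint
    rw [← hXfg] at hmul
    refine hmul.trans ?_
    filter_upwards [hcond_g] with ω hω
    simp only [Pi.mul_apply, Pi.zero_apply]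
    rw [hω, hEg, mul_zero]
  -- A facts
  have hA1m : StronglyMeasurable (A 1) := ((hA.1 1).mono (ℱ.le 1) le_rfl).stronglyMeasurable
  have hAnonneg : ∀ᵐ ω ∂μ, ∀ t, 0 ≤ A t ω := by
    filter_upwards [hA.2.1] with ω hω t
    obtain ⟨h0, hmono, _⟩ := hω
    calc (0:ℝ) = A 0 ω := h0.symm
    _ ≤ A t ω := hmono zero_le
  have hA1int : Integrable (A 1) μ := by
    refine (integrable_const (1:ℝ)).mono' hA1m.aestronglyMeasurable ?_
    filter_upwards [h, hAnonneg] with ω h1 h0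
    rw [Real.norm_eq_abs, abs_le]
    exact ⟨by linarith [h0 1], h1⟩
  have hmart := hA.2.2
  have hYint : Integrable (fun ω => ((μ[X|ℱ 1]) ω)^2 - A 1 ω) μ := hmart.integrable 1
  have hM1sq_int : Integrable (fun ω => ((μ[X|ℱ 1]) ω)^2) μ := by
    refine (hYint.add hA1int).congr (Filter.Eventually.of_forall fun ω => ?_)
    simp only [Pi.add_apply]
    ring
  have hXsq : ∀ ω, X ω ^ 2 = 2 * (W (1/2) ω)^2 := by
    intro ω
    rw [hX]
    simp only
    rw [mul_pow, mul_pow, sgn_sq, Real.sq_sqrt (by norm_num : (0:ℝ) ≤ 2)]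
    ring
  have hM1sq : (fun ω => ((μ[X|ℱ 1]) ω)^2) = fun ω => 2*(W (1/2) ω)^2 := by
    funext ω
    rw [hM1]
    exact hXsq ω
  have hcondM1sq : μ[fun ω => ((μ[X|ℱ 1]) ω)^2 | ℱ (1/2)] = fun ω => 2*(W (1/2) ω)^2 := by
    rw [hM1sq]
    exact condExp_of_stronglyMeasurable (ℱ.le _)
      (((hW.1 (1/2)).pow_const 2).const_mul 2).stronglyMeasurable (hM1sq ▸ hM1sq_int)
  have hcondA1_le : ∀ᵐ ω ∂μ, (μ[A 1|ℱ (1/2)]) ω ≤ 1 := by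
    have h1 : μ[A 1|ℱ (1/2)] ≤ᵐ[μ] μ[(fun _ => (1:ℝ))|ℱ (1/2)] :=
      condExp_mono hA1int (integrable_const 1) h
    filter_upwards [h1] with ω hω
    rwa [condExp_const (ℱ.le _)] at hω
  have hsplit : μ[fun ω => ((μ[X|ℱ 1]) ω)^2 - A 1 ω|ℱ (1/2)]
      =ᵐ[μ] μ[fun ω => ((μ[X|ℱ 1]) ω)^2|ℱ (1/2)] - μ[A 1|ℱ (1/2)] :=
    condExp_sub hM1sq_int hA1int _
  have hkey := hmart.2 (1/2) 1 half_le_one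
  have hAhalf_nonneg : ∀ᵐ ω ∂μ, 0 ≤ A (1/2) ω := by
    filter_upwards [hAnonneg] with ω hω; exact hω _
  have hfinal : ∀ᵐ ω ∂μ, 2*(W (1/2) ω)^2 ≤ 1 := by
    filter_upwards [hkey, hsplit, hcondA1_le, hMhalf, hAhalf_nonneg] with ω hk hs hle hMh hAh
    have e1 : (μ[fun ω => ((μ[X|ℱ 1]) ω)^2|ℱ (1/2)]) ω = 2*(W (1/2) ω)^2 :=
      congrFun hcondM1sq ω
    have e2 : ((μ[X|ℱ (1/2)]) ω) = 0 := hMh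
    rw [hs] at hk
    simp only [Pi.sub_apply] at hk
    rw [e1, e2] at hk
    nlinarith [hk, hle, hAh]
  -- contradiction with Gaussian law
  have hae2 : μ {ω | 1 < D0 ω} = 0 := by
    have hnot : ∀ᵐ ω ∂μ, ¬ (1 < D0 ω) := by
      filter_upwards [hfinal, hW0] with ω h1 h0
      intro hgt
      have hD0W : D0 ω = W (1/2) ω := by simp [hD0def, h0]
      rw [hD0W] at hgt
      nlinarith
    simpa using ae_iff.mp hnot
  have hmap0 : μ.map D0 (Set.Ioi (1:ℝ)) = 0 := by
    rw [Measure.map_apply hD0m measurableSet_Ioi]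
    exact hae2
  rw [hmapD0] at hmap0
  exact gaussian_Ioi_ne_zero (by norm_num) hmap0
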